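/- Let Δ₁ > Δ₂ ≥ 2 be integers and consider the symmetric 3×3 matrix L₁ with rows (Δ₁, -1, -1), (-1, Δ₂, -1), (-1, -1, Δ₂). Then the eigenvalues of L₁ are (Δ₁ + Δ₂ - 1)/2 ± (1/2)·√((Δ₁ - Δ₂)(Δ₁ - Δ₂ + 2) + 9) and Δ₂ + 1; in particular the second largest eigenvalue of L₁ equals Δ₂ + 1. -/

import Mathlib

open Finset

/-- The `k`-th largest element (1-indexed) of a multiset of reals, with default `0`. -/
noncomputable def kthLargestR (s : Multiset ℝ) (k : ℕ) : ℝ :=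
  (s.sort (· ≤ ·)).reverse.getD (k - 1) 0

/-- The second largest eigenvalue (i.e. second largest root, with multiplicity, of the
characteristic polynomial) of a square real matrix. -/
noncomputable def secondLargestEig {k : ℕ} (M : Matrix (Fin k) (Fin k) ℝ) : ℝ :=
  kthLargestR M.charpoly.roots 2

open Polynomial in
lemma charpoly_fact (a b : ℝ) :
    (Matrix.charpoly !![a, -1, -1; -1, b, -1; -1, -1, b]) =
      (X - C ((a+b-1)/2 + Real.sqrt ((a-b)*(a-b+2)+9) / 2)) *
      ((X - C ((a+b-1)/2 - Real.sqrt ((a-b)*(a-b+2)+9) / 2)) *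
      (X - C (b+1))) := by
  have hD : (0:ℝ) ≤ (a-b)*(a-b+2)+9 := by nlinarith [sq_nonneg (a-b+1)]
  have hs : Real.sqrt ((a-b)*(a-b+2)+9) ^ 2 = (a-b)*(a-b+2)+9 := Real.sq_sqrt hD
  apply Polynomial.funext
  intro x
  rw [Matrix.charpoly, Matrix.det_fin_three]
  simp [Matrix.charmatrix_apply, Matrix.one_apply, Matrix.vecHead, Matrix.vecTail]
  linear_combination (x/4 - b/4 - 1/4) * hs

/-- For integers `Δ₁ > Δ₂ ≥ 2`, the eigenvalues of the matrix `L₁` are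
`(Δ₁ + Δ₂ - 1)/2 ± (1/2)·√((Δ₁ - Δ₂)(Δ₁ - Δ₂ + 2) + 9)` and `Δ₂ + 1`; in particular the
second largest eigenvalue of `L₁` equals `Δ₂ + 1`. -/
theorem stmt19 (Δ₁ Δ₂ : ℤ) (h₂ : 2 ≤ Δ₂) (h₁ : Δ₂ < Δ₁) :
    (Matrix.charpoly !![(Δ₁ : ℝ), -1, -1;
                        -1, (Δ₂ : ℝ), -1;
                        -1, -1, (Δ₂ : ℝ)]).roots =
        {((Δ₁ : ℝ) + (Δ₂ : ℝ) - 1) / 2 +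
            Real.sqrt (((Δ₁ : ℝ) - Δ₂) * ((Δ₁ : ℝ) - Δ₂ + 2) + 9) / 2,
          ((Δ₁ : ℝ) + (Δ₂ : ℝ) - 1) / 2 -
            Real.sqrt (((Δ₁ : ℝ) - Δ₂) * ((Δ₁ : ℝ) - Δ₂ + 2) + 9) / 2,
          (Δ₂ : ℝ) + 1} ∧
      secondLargestEig !![(Δ₁ : ℝ), -1, -1;
                          -1, (Δ₂ : ℝ), -1;
                          -1, -1, (Δ₂ : ℝ)] = (Δ₂ : ℝ) + 1 := by
  set a : ℝ := (Δ₁ : ℝ) with ha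
  set b : ℝ := (Δ₂ : ℝ) with hb
  have hab : b + 1 ≤ a := by
    rw [ha, hb]
    exact_mod_cast h₁
  have hb2 : (2:ℝ) ≤ b := by rw [hb]; exact_mod_cast h₂
  set d : ℝ := Real.sqrt ((a-b)*(a-b+2)+9) with hd
  have hD : (0:ℝ) ≤ (a-b)*(a-b+2)+9 := by nlinarith [sq_nonneg (a-b+1)]
  have hs : d ^ 2 = (a-b)*(a-b+2)+9 := Real.sq_sqrt hD
  have hd0 : 0 ≤ d := Real.sqrt_nonneg _
  set r₁ : ℝ := (a+b-1)/2 + d/2 with hr₁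
  set r₂ : ℝ := (a+b-1)/2 - d/2 with hr₂
  set c : ℝ := b + 1 with hc
  -- inequalities
  have h21 : r₂ ≤ c := by
    rw [hr₂, hc]
    nlinarith [hs, hd0, sq_nonneg (d - (a-b-3))]
  have h1c : c ≤ r₁ := by
    rw [hr₁, hc]
    nlinarith [hs, hd0, sq_nonneg (d-2)]
  have h21' : r₂ ≤ r₁ := le_trans h21 h1c
  -- roots
  have hroots : (Matrix.charpoly !![a, -1, -1; -1, b, -1; -1, -1, b]).roots
      = ({r₁, r₂, c} : Multiset ℝ) := by
    rw [charpoly_fact a b]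
    have : (Polynomial.X - Polynomial.C r₁) * ((Polynomial.X - Polynomial.C r₂) * (Polynomial.X - Polynomial.C c))
        = (({r₁, r₂, c} : Multiset ℝ).map (fun t => Polynomial.X - Polynomial.C t)).prod := by
      simp [Multiset.map_cons, Multiset.prod_cons]
    rw [this, Polynomial.roots_multiset_prod_X_sub_C]
  refine ⟨hroots, ?_⟩
  -- second largest eigenvalue
  rw [secondLargestEig, kthLargestR, hroots]
  have hsort : Multiset.sort ({r₁, r₂, c} : Multiset ℝ) (· ≤ ·) = [r₂, c, r₁] := by
    have hmeq : ({r₁, r₂, c} : Multiset ℝ) = ({r₂, c, r₁} : Multiset ℝ) := by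
      show r₁ ::ₘ r₂ ::ₘ c ::ₘ 0 = r₂ ::ₘ c ::ₘ r₁ ::ₘ 0
      rw [Multiset.cons_swap r₁ r₂, Multiset.cons_swap r₁ c]
    refine (fun p s₁ s₂ => List.Perm.eq_of_pairwise' s₁ s₂ p) ?_ (Multiset.pairwise_sort _ _) ?_
    · rw [← Multiset.coe_eq_coe, Multiset.sort_eq, hmeq]
      rfl
    · simp [List.pairwise_cons]
      exact ⟨⟨h21, h21'⟩, h1c⟩
  rw [hsort]
  simp
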